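/- Let k be a field of characteristic p > 0, fix an algebraic closure k̄ of k, and let k' ⊆ k̄ be a finite extension of k^{p^∞}. Let kk' denote the compositum of k and k' inside k̄. Then the maximal perfect subfield of kk' equals k', i.e. (kk')^{p^∞} = k'. -/
import Mathlib

/-- For a subfield `k` of an ambient field `Ω` of characteristic `p > 0`, the maximal perfect
subfield `k^{p^∞} = ⋂ₙ k^{pⁿ}` of `k`, viewed as a subfield of `Ω`; here `k^{pⁿ}` is the image
of `k` under the `n`-fold Frobenius `x ↦ x^{pⁿ}`. -/
noncomputable def relMaxPerfect (p : ℕ) (Ω : Type*) [Field Ω] [Fact p.Prime] [CharP Ω p]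
    (k : Subfield Ω) : Subfield Ω :=
  ⨅ n : ℕ, k.map (iterateFrobenius Ω p n)

open Finset in
theorem key_compositum {Ω : Type*} [Field Ω]
    (L : ℕ → Subfield Ω) (hL : ∀ {a b : ℕ}, a ≤ b → L b ≤ L a)
    (k' : Subfield Ω) (hFle : (⨅ n, L n) ≤ k')
    (m : ℕ) (e : Fin m → Ω) (he : ∀ i, e i ∈ k')
    (hspan : ∀ x ∈ k', ∃ c : Fin m → Ω, (∀ i, c i ∈ (⨅ n, L n)) ∧ x = ∑ i, c i * e i) :
    (⨅ n, (L n ⊔ k')) ≤ k' := by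
  classical
  -- Step A: explicit description of `L' ⊔ k'` as the `L'`-span of `e`.
  have stepA : ∀ (L' : Subfield Ω), (⨅ n, L n) ≤ L' → ∀ x ∈ L' ⊔ k',
      ∃ c : Fin m → Ω, (∀ i, c i ∈ L') ∧ x = ∑ i, c i * e i := by
    intro L' hle x hx
    set W : Submodule ↥L' Ω := Submodule.span ↥L' (Set.range e) with hW
    have hK'W : ∀ y ∈ k', y ∈ W := by
      intro y hy
      obtain ⟨c, hc, rfl⟩ := hspan y hy
      rw [hW, Submodule.mem_span_range_iff_exists_fun]
      exact ⟨fun i => ⟨c i, hle (hc i)⟩, rfl⟩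
    have hmul : ∀ x y : Ω, x ∈ W → y ∈ W → x * y ∈ W := by
      intro a b ha hb
      have h2 : W * W ≤ W := by
        rw [hW, Submodule.span_mul_span, Submodule.span_le]
        rintro z ⟨u, ⟨i, rfl⟩, v, ⟨j, rfl⟩, rfl⟩
        exact hK'W _ (mul_mem (he i) (he j))
      exact h2 (Submodule.mul_mem_mul ha hb)
    have h1 : (1 : Ω) ∈ W := hK'W 1 k'.one_mem
    set A : Subalgebra ↥L' Ω := W.toSubalgebra h1 hmul with hA
    have hfg : (Subalgebra.toSubmodule A).FG := Submodule.fg_span (Set.finite_range e)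
    have hinv : ∀ y : Ω, y ∈ W → y⁻¹ ∈ W := by
      intro y hy
      by_cases hy0 : y = 0
      · rw [hy0, inv_zero]; exact W.zero_mem
      · have hint : IsIntegral ↥L' y := IsIntegral.of_mem_of_fg A hfg y hy
        exact Subalgebra.inv_mem_of_algebraic A (x := ⟨y, hy⟩) hint.isAlgebraic
    set SF : Subfield Ω := { A.toSubring with inv_mem' := fun y hy => hinv y hy } with hSF
    have hsup : L' ⊔ k' ≤ SF := by
      refine sup_le (fun a ha => ?_) (fun a ha => hK'W a ha)
      exact A.algebraMap_mem ⟨a, ha⟩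
    have hxW : x ∈ W := hsup hx
    rw [hW, Submodule.mem_span_range_iff_exists_fun] at hxW
    obtain ⟨c, hc⟩ := hxW
    exact ⟨fun i => (c i : Ω), fun i => (c i).2, hc.symm⟩

  -- independence predicate
  set indep : ℕ → Finset (Fin m) → Prop :=
    fun n S => ∀ c : Fin m → Ω, (∀ i, c i ∈ L n) → ∑ i ∈ S, c i * e i = 0 → ∀ i ∈ S, c i = 0
    with hindep
  have hindep_mono : ∀ {a b : ℕ}, a ≤ b → ∀ S, indep a S → indep b S := by
    intro a b hab S h c hc hsum
    exact h c (fun i => hL hab (hc i)) hsum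
  have hindep_empty : ∀ n, indep n ∅ := by
    intro n c _ _ i hi
    simp at hi
  set Good : ℕ → Finset (Finset (Fin m)) := fun n => Finset.univ.filter (indep n) with hGood
  set d : ℕ → ℕ := fun n => (Good n).sup Finset.card with hd
  have hGood_empty : ∀ n, ∅ ∈ Good n := fun n =>
    Finset.mem_filter.mpr ⟨Finset.mem_univ _, hindep_empty n⟩
  have hd_le : ∀ n, d n ≤ m := by
    intro n
    refine Finset.sup_le fun S _ => ?_
    simpa using Finset.card_le_card (Finset.subset_univ S)
  have hd_mono : Monotone d := by
    intro a b hab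
    refine Finset.sup_le fun S hS => ?_
    have hS' : S ∈ Good b := by
      simp only [hGood, Finset.mem_filter] at hS ⊢
      exact ⟨hS.1, hindep_mono hab S hS.2⟩
    exact Finset.le_sup hS'
  -- choose N where d stabilizes
  have hbdd : BddAbove (Set.range d) := ⟨m, by rintro _ ⟨n, rfl⟩; exact hd_le n⟩
  obtain ⟨N, hN⟩ : ∃ N, d N = sSup (Set.range d) := Nat.sSup_mem ⟨d 0, Set.mem_range_self 0⟩ hbdd
  have hdN : ∀ n, d n ≤ d N := fun n => hN ▸ le_csSup hbdd ⟨n, rfl⟩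
  -- a maximal independent set at level N
  obtain ⟨S, hSGood, hScard⟩ := Finset.exists_mem_eq_sup (Good N) ⟨∅, hGood_empty N⟩ Finset.card
  have hSindepN : indep N S := (Finset.mem_filter.mp hSGood).2
  have hSindep : ∀ n, N ≤ n → indep n S := fun n hn => hindep_mono hn S hSindepN
  have hdn : ∀ n, N ≤ n → d n = S.card := fun n hn =>
    le_antisymm (hScard ▸ hdN n) (hScard ▸ hd_mono hn)
  -- every e j is an L n combination of e over S, for n ≥ N
  have hspanS : ∀ n, N ≤ n → ∀ j, ∃ c : Fin m → Ω, (∀ i, c i ∈ L n) ∧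
      e j = ∑ i ∈ S, c i * e i := by
    intro n hn j
    by_cases hj : j ∈ S
    · refine ⟨fun i => if i = j then 1 else 0, fun i => by
        show (if i = j then (1:Ω) else 0) ∈ L n
        split
        · exact one_mem _
        · exact zero_mem _, ?_⟩
      have : ∑ i ∈ S, (if i = j then (1:Ω) else 0) * e i = e j := by
        simp [ite_mul, Finset.sum_ite_eq' S j, hj]
      exact this.symm
    · have hnot : ¬ indep n (insert j S) := by
        intro h
        have hmem : insert j S ∈ Good n := Finset.mem_filter.mpr ⟨Finset.mem_univ _, h⟩
        have hle' : #(insert j S) ≤ d n := Finset.le_sup hmem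
        rw [hdn n hn, Finset.card_insert_of_notMem hj] at hle'
        omega
      have hnot' : ¬ (∀ c : Fin m → Ω, (∀ i, c i ∈ L n) →
          ∑ i ∈ insert j S, c i * e i = 0 → ∀ i ∈ insert j S, c i = 0) := hnot
      push_neg at hnot'
      obtain ⟨c, hc, hsum, i0, hi0, hi0ne⟩ := hnot'
      rw [Finset.sum_insert hj] at hsum
      have hcj : c j ≠ 0 := by
        intro h0
        rw [h0, zero_mul, zero_add] at hsum
        have hz := hSindep n hn c hc hsum
        rcases Finset.mem_insert.mp hi0 with h | h
        · exact hi0ne (h ▸ h0)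
        · exact hi0ne (hz i0 h)
      refine ⟨fun i => -(c j)⁻¹ * c i, fun i => mul_mem (neg_mem (inv_mem (hc j))) (hc i), ?_⟩
      have h1' : ∑ i ∈ S, c i * e i = -(c j * e j) := eq_neg_of_add_eq_zero_right hsum
      have hT : ∑ i ∈ S, -(c j)⁻¹ * c i * e i = -(c j)⁻¹ * ∑ i ∈ S, c i * e i := by
        rw [Finset.mul_sum]
        exact Finset.sum_congr rfl fun i _ => mul_assoc _ _ _
      rw [hT, h1', mul_neg, neg_mul, neg_neg, inv_mul_cancel_left₀ hcj]
  -- upgrade full representations to representations over S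
  have hRep' : ∀ n, N ≤ n → ∀ x : Ω, (∃ c : Fin m → Ω, (∀ i, c i ∈ L n) ∧ x = ∑ i, c i * e i) →
      ∃ c : Fin m → Ω, (∀ i, c i ∈ L n) ∧ x = ∑ i ∈ S, c i * e i := by
    intro n hn x ⟨c, hc, hx⟩
    choose r hr1 hr2 using hspanS n hn
    refine ⟨fun i => ∑ j, c j * r j i,
      fun i => sum_mem (fun j _ => mul_mem (hc j) (hr1 j i)), ?_⟩
    calc x = ∑ j, c j * e j := hx
    _ = ∑ j, ∑ i ∈ S, c j * (r j i * e i) := by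
        refine Finset.sum_congr rfl fun j _ => ?_
        rw [hr2 j, Finset.mul_sum]
    _ = ∑ i ∈ S, ∑ j, c j * (r j i * e i) := Finset.sum_comm
    _ = ∑ i ∈ S, (∑ j, c j * r j i) * e i := by
        refine Finset.sum_congr rfl fun i _ => ?_
        rw [Finset.sum_mul]
        exact Finset.sum_congr rfl fun j _ => by ring
  -- conclusion
  intro x hx
  rw [Subfield.mem_iInf] at hx
  have hx' : ∀ n, N ≤ n → ∃ c : Fin m → Ω, (∀ i, c i ∈ L n) ∧ x = ∑ i ∈ S, c i * e i :=
    fun n hn => hRep' n hn x (stepA (L n) (iInf_le L n) x (hx n))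
  obtain ⟨c, hcN, hxN⟩ := hx' N le_rfl
  have hkey : ∀ i ∈ S, ∀ n, c i ∈ L n := by
    intro i hi n
    rcases le_or_gt n N with h | h
    · exact hL h (hcN i)
    · obtain ⟨c', hc', hx''⟩ := hx' n h.le
      have hz : ∑ j ∈ S, (c j - c' j) * e j = 0 := by
        simp only [sub_mul, Finset.sum_sub_distrib, ← hxN, ← hx'', sub_self]
      have hzero : c i - c' i = 0 := hSindepN (fun j => c j - c' j)
        (fun j => sub_mem (hcN j) (hL h.le (hc' j))) hz i hi
      have hci : c i = c' i := sub_eq_zero.mp hzero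
      exact hci ▸ hc' i
  have hcin : ∀ i ∈ S, c i ∈ k' := fun i hi => hFle (Subfield.mem_iInf.mpr (hkey i hi))
  rw [hxN]
  exact sum_mem fun i hi => mul_mem (hcin i hi) (he i)

section auxlemmas

variable (p : ℕ) [Fact p.Prime] {Ω : Type*} [Field Ω] [CharP Ω p]

theorem map_iterateFrobenius_le_self (k : Subfield Ω) (t : ℕ) :
    k.map (iterateFrobenius Ω p t) ≤ k := by
  intro x hx
  rw [Subfield.mem_map] at hx
  obtain ⟨y, hy, rfl⟩ := hx
  rw [iterateFrobenius_def]
  exact pow_mem hy _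

theorem map_iterateFrobenius_antitone (k : Subfield Ω) {a b : ℕ} (h : a ≤ b) :
    k.map (iterateFrobenius Ω p b) ≤ k.map (iterateFrobenius Ω p a) := by
  obtain ⟨t, rfl⟩ := Nat.exists_eq_add_of_le h
  rw [iterateFrobenius_add, ← Subfield.map_map]
  exact (Subfield.gc_map_comap _).monotone_l (map_iterateFrobenius_le_self p k t)

variable [IsAlgClosed Ω]

theorem relMaxPerfect_pth_root (k : Subfield Ω) :
    ∀ x ∈ relMaxPerfect p Ω k, ∃ y ∈ relMaxPerfect p Ω k, y ^ p = x := by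
  intro x hx
  obtain ⟨y, hy⟩ := surjective_frobenius Ω p x
  refine ⟨y, ?_, by rw [← hy, frobenius_def]⟩
  rw [relMaxPerfect, Subfield.mem_iInf]
  intro n
  have hx' : x ∈ k.map (iterateFrobenius Ω p (n + 1)) := by
    rw [relMaxPerfect, Subfield.mem_iInf] at hx
    exact hx (n + 1)
  rw [Subfield.mem_map] at hx' ⊢
  obtain ⟨z, hz, hzx⟩ := hx'
  refine ⟨z, hz, frobenius_inj Ω p ?_⟩
  have h2 : frobenius Ω p (iterateFrobenius Ω p n z) = iterateFrobenius Ω p (n + 1) z := by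
    rw [frobenius_def, iterateFrobenius_def, iterateFrobenius_def, ← pow_mul, pow_succ]
  rw [h2, hzx, hy]

theorem perfectField_relMaxPerfect (k : Subfield Ω) :
    PerfectField ↥(relMaxPerfect p Ω k) := by
  have hsurj : Function.Surjective (frobenius ↥(relMaxPerfect p Ω k) p) := by
    rintro ⟨x, hx⟩
    obtain ⟨y, hyF, hyp⟩ := relMaxPerfect_pth_root p k x hx
    exact ⟨⟨y, hyF⟩, Subtype.ext (by simp [frobenius_def, hyp])⟩
  haveI : PerfectRing ↥(relMaxPerfect p Ω k) p := PerfectRing.ofSurjective _ _ hsurj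
  exact PerfectRing.toPerfectField _ p

end auxlemmas

/-- **Lemma 1.1(ii)**: let `k` be a field of characteristic `p > 0` with algebraic closure `k̄`
(here `Ω`, algebraically closed and algebraic over `k`), and let `k' ⊆ k̄` be a finite extension
of `k^{p^∞}`.  Then the maximal perfect subfield of the compositum `kk'` equals `k'`. -/
theorem maximalPerfect_of_compositum (p : ℕ) [Fact p.Prime]
    (Ω : Type*) [Field Ω] [CharP Ω p] [IsAlgClosed Ω]
    (k : Subfield Ω) (halg : Algebra.IsAlgebraic k Ω)
    (k' : Subfield Ω) (hle : relMaxPerfect p Ω k ≤ k')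
    (hfin : letI : Algebra ↥(relMaxPerfect p Ω k) ↥k' := (Subfield.inclusion hle).toAlgebra;
      Module.Finite ↥(relMaxPerfect p Ω k) ↥k') :
    relMaxPerfect p Ω (k ⊔ k') = k' := by
  classical
  letI : Algebra ↥(relMaxPerfect p Ω k) ↥k' := (Subfield.inclusion hle).toAlgebra
  haveI : Module.Finite ↥(relMaxPerfect p Ω k) ↥k' := hfin
  haveI : PerfectField ↥(relMaxPerfect p Ω k) := perfectField_relMaxPerfect p k
  haveI : Algebra.IsAlgebraic ↥(relMaxPerfect p Ω k) ↥k' :=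
    Algebra.IsAlgebraic.of_finite _ _
  haveI : PerfectField ↥k' :=
    Algebra.IsAlgebraic.perfectField (K := ↥(relMaxPerfect p Ω k)) (L := ↥k')
  haveI : PerfectRing ↥k' p := PerfectField.toPerfectRing (K := ↥k') p
  -- `k'` is a perfect subfield
  have hk'map1 : k'.map (frobenius Ω p) = k' := by
    apply le_antisymm
    · rintro x hx
      rw [Subfield.mem_map] at hx
      obtain ⟨y, hy, rfl⟩ := hx
      rw [frobenius_def]
      exact pow_mem hy p
    · intro x hx
      obtain ⟨y, hy⟩ := surjective_frobenius ↥k' p ⟨x, hx⟩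
      rw [Subfield.mem_map]
      refine ⟨y, y.2, ?_⟩
      have h2 := congrArg (Subtype.val) hy
      simp only [frobenius_def] at h2 ⊢
      simpa using h2
  have hk'mapn : ∀ n, k'.map (iterateFrobenius Ω p n) = k' := by
    intro n
    induction n with
    | zero =>
      rw [iterateFrobenius_zero]
      ext x
      simp [Subfield.mem_map]
    | succ n ih =>
      have h2 := iterateFrobenius_add Ω p 1 n
      rw [Nat.add_comm 1 n] at h2
      rw [h2, iterateFrobenius_one, ← Subfield.map_map, ih, hk'map1]
  -- a finite spanning family for `k'` over the maximal perfect subfield of `k`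
  obtain ⟨m, s, hs⟩ := Module.Finite.exists_fin (R := ↥(relMaxPerfect p Ω k)) (M := ↥k')
  set e : Fin m → Ω := fun i => ((s i : ↥k') : Ω) with he_def
  have he : ∀ i, e i ∈ k' := fun i => (s i).2
  have hspan : ∀ x ∈ k', ∃ c : Fin m → Ω,
      (∀ i, c i ∈ relMaxPerfect p Ω k) ∧ x = ∑ i, c i * e i := by
    intro x hx
    have hx' : (⟨x, hx⟩ : ↥k') ∈ (⊤ : Submodule ↥(relMaxPerfect p Ω k) ↥k') := trivial
    rw [← hs, Submodule.mem_span_range_iff_exists_fun] at hx'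
    obtain ⟨c, hc⟩ := hx'
    refine ⟨fun i => ((c i : ↥(relMaxPerfect p Ω k)) : Ω), fun i => (c i).2, ?_⟩
    have h2 : ((∑ i, c i • s i : ↥k') : Ω) = x := congrArg Subtype.val hc
    rw [AddSubmonoidClass.coe_finset_sum] at h2
    rw [← h2]
    refine Finset.sum_congr rfl fun i _ => ?_
    show (((c i • s i : ↥k')) : Ω) = _
    rw [Algebra.smul_def, RingHom.algebraMap_toAlgebra]
    rfl
  have hdecomp : relMaxPerfect p Ω (k ⊔ k')
      = ⨅ n, (k.map (iterateFrobenius Ω p n) ⊔ k') := by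
    show (⨅ n : ℕ, (k ⊔ k').map (iterateFrobenius Ω p n)) = _
    exact iInf_congr fun n => by rw [Subfield.map_sup, hk'mapn n]
  have hFle : (⨅ n, k.map (iterateFrobenius Ω p n)) ≤ k' := hle
  apply le_antisymm
  · rw [hdecomp]
    exact key_compositum _ (fun hab => map_iterateFrobenius_antitone p k hab) k'
      hFle m e he hspan
  · rw [hdecomp]
    exact le_iInf fun n => le_sup_right
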